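/- Let e ≥ 2, let w ∈ {3,4}, and let B be a block of e-weight w forming [w:k_1]-, …, [w:k_t]-pairs via t distinct runners i_1, …, i_t (each k_m ≥ 1). If a partition σ lying in B is exceptional for every one of these pairs, then (k_1+1) + (k_2+1) + ⋯ + (k_t+1) ≤ w. In particular, for w = 3 this forces t = 1 and k_1 ≤ 2, and for w = 4 it forces either t = 1 and k_1 ≤ 3, or t = 2 and k_1 = k_2 = 1. -/

import Mathlib

/-- A partition: a weakly decreasing function `parts : ℕ → ℕ` (0-indexed),
having exactly `len` nonzero parts. -/
structure AbacusPartition where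
  parts : ℕ → ℕ
  antitone : Antitone parts
  len : ℕ
  pos_of_lt : ∀ i, i < len → 0 < parts i
  zero_of_ge : ∀ i, len ≤ i → parts i = 0

/-- The beta-set (abacus display) of a partition with `r` beads:
positions `λ_i + r - i` for `1 ≤ i ≤ r` (0-indexed: `parts i + (r - 1 - i)`). -/
def AbacusPartition.betaSet (lam : AbacusPartition) (r : ℕ) : Finset ℕ :=
  (Finset.range r).image (fun i => lam.parts i + (r - 1 - i))

/-- e-weight of the bead at position `p` of the display `B`: the number of
unoccupied positions `q < p` with `q ≡ p (mod e)`. -/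
def beadWeight (e : ℕ) (B : Finset ℕ) (p : ℕ) : ℕ :=
  ((Finset.range p).filter (fun q => q % e = p % e ∧ q ∉ B)).card

/-- Total e-weight of the display `B`. -/
def abacusWeight (e : ℕ) (B : Finset ℕ) : ℕ :=
  B.sum (fun p => beadWeight e B p)

/-- e-weight of a partition (computed from the display with `lam.len` beads). -/
def eWeight (e : ℕ) (lam : AbacusPartition) : ℕ :=
  abacusWeight e (lam.betaSet lam.len)

/-- Positions on runner `res` (positions `p` with `p % e = res`), in increasing
order, up to a bound strictly beyond every bead. -/
def posList (e : ℕ) (B : Finset ℕ) (res : ℕ) : List ℕ :=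
  (List.range (B.sup id + e + 2)).filter (fun p => p % e == res)

/-- One step of the signature-reduction automaton; the state is
`(list of surviving '+' positions, stack of pending '−' positions)`.
A '−' occurs at `p` when `p` is occupied and its preceding position unoccupied
(position `-1` counts as occupied); a '+' occurs at `p` when `p` is unoccupied
and its preceding position occupied.  A '+' cancels the most recent pending '−'. -/
def signStep (B : Finset ℕ) (st : List ℕ × List ℕ) (p : ℕ) : List ℕ × List ℕ :=
  if p ∈ B ∧ ¬(p = 0 ∨ p - 1 ∈ B) then (st.1, p :: st.2)
  else if p ∉ B ∧ (p = 0 ∨ p - 1 ∈ B) then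
    (match st.2 with
     | [] => (p :: st.1, ([] : List ℕ))
     | _ :: tl => (st.1, tl))
  else st

/-- Final state of the reduction of the `j`-signature on runner `res`:
`(surviving '+' (conormal) positions, surviving '−' (normal) positions)`,
each list in decreasing order of position. -/
def signState (e : ℕ) (B : Finset ℕ) (res : ℕ) : List ℕ × List ℕ :=
  (posList e B res).foldl (signStep B) ([], [])

/-- Positions of the normal beads on runner `res`, in decreasing order. -/
def normalList (e : ℕ) (B : Finset ℕ) (res : ℕ) : List ℕ := (signState e B res).2

/-- The conormal positions on runner `res`, in decreasing order. -/
def conormalList (e : ℕ) (B : Finset ℕ) (res : ℕ) : List ℕ := (signState e B res).1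

/-- ε: the number of normal beads on runner `res`. -/
def epsB (e : ℕ) (B : Finset ℕ) (res : ℕ) : ℕ := (normalList e B res).length

/-- φ: the number of conormal positions on runner `res`. -/
def phiB (e : ℕ) (B : Finset ℕ) (res : ℕ) : ℕ := (conormalList e B res).length

/-- ε_j of a partition: in the display with `lam.len` beads, residue `j`
is carried by runner `(j + lam.len) % e`. -/
def epsP (e : ℕ) (lam : AbacusPartition) (j : ℕ) : ℕ :=
  epsB e (lam.betaSet lam.len) ((j + lam.len) % e)

/-- φ_j of a partition. -/
def phiP (e : ℕ) (lam : AbacusPartition) (j : ℕ) : ℕ :=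
  phiB e (lam.betaSet lam.len) ((j + lam.len) % e)

/-- Move each bead in `ps` from its position `p` to `p - 1`. -/
def moveDown (B : Finset ℕ) (ps : List ℕ) : Finset ℕ :=
  ps.foldl (fun C p => insert (p - 1) (C.erase p)) B

/-- For each position `p` in `ps`, move the bead at `p - 1` to `p`. -/
def moveUp (B : Finset ℕ) (ps : List ℕ) : Finset ℕ :=
  ps.foldl (fun C p => insert p (C.erase (p - 1))) B

/-- Ẽ^t on displays: move the `t` normal beads at the smallest positions down. -/
def Etil (e : ℕ) (B : Finset ℕ) (res t : ℕ) : Finset ℕ :=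
  moveDown B ((normalList e B res).reverse.take t)

/-- F̃^t on displays: for the `t` largest conormal positions `p`,
move the bead at `p - 1` to `p`. -/
def Ftil (e : ℕ) (B : Finset ℕ) (res t : ℕ) : Finset ℕ :=
  moveUp B ((conormalList e B res).take t)

/-- Number of beads of `B` on runner `i`. -/
def runnerCount (e : ℕ) (B : Finset ℕ) (i : ℕ) : ℕ :=
  (B.filter (fun p => p % e = i)).card

/-- Sum of the e-weights of the beads of `B` on runner `i` (this is `|λ(i)|`). -/
def runnerWeight (e : ℕ) (B : Finset ℕ) (i : ℕ) : ℕ :=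
  (B.filter (fun p => p % e = i)).sum (beadWeight e B)

/-- The display of the e-core: slide every bead as far up its runner as possible. -/
def coreBeta (e : ℕ) (B : Finset ℕ) : Finset ℕ :=
  (Finset.range e).biUnion
    (fun i => (Finset.range (runnerCount e B i)).image (fun m => i + m * e))

/-- `lam` lies in the block with bead counts `bd 0, …, bd (e-1)` and e-weight `w`:
displayed with `r = bd 0 + ⋯ + bd (e-1)` beads it has `bd i` beads on runner `i`
and e-weight `w`. -/
def inBlock (e : ℕ) (bd : ℕ → ℕ) (w : ℕ) (lam : AbacusPartition) : Prop :=
  lam.len ≤ (Finset.range e).sum bd ∧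
  (∀ i < e, runnerCount e (lam.betaSet ((Finset.range e).sum bd)) i = bd i) ∧
  abacusWeight e (lam.betaSet ((Finset.range e).sum bd)) = w

/-- The single-runner beta-set of the partition with parts `ρ` and `c` beads. -/
def oneRunnerBeta (rho : List ℕ) (c : ℕ) : Finset ℕ :=
  (Finset.range c).image (fun t => rho.getD t 0 + (c - 1 - t))

/-- The display of the partition `⟨0_{lamOf 0}, …, (e−1)_{lamOf (e−1)} | bd 0, …, bd (e−1)⟩`. -/
def display (e : ℕ) (bd : ℕ → ℕ) (lamOf : ℕ → List ℕ) : Finset ℕ :=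
  (Finset.range e).biUnion
    (fun i => (oneRunnerBeta (lamOf i) (bd i)).image (fun m => i + m * e))

/-- The operator Ḟ at runner `res`: apply F̃^{φ} (valid when ε = 0 < φ). -/
def dotF (e : ℕ) (B : Finset ℕ) (res : ℕ) : Finset ℕ := Ftil e B res (phiB e B res)

/-- Apply a chain of Ḟ steps. -/
def chainFold (e : ℕ) : Finset ℕ → List ℕ → Finset ℕ
  | B, [] => B
  | B, i :: rest => chainFold e (dotF e B i) rest

/-- The chain of Ḟ steps is semisimple: at each step ε = 0 before, φ > 0 before,
and φ = 0 afterwards. -/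
def validChain (e : ℕ) : Finset ℕ → List ℕ → Prop
  | _, [] => True
  | B, i :: rest =>
      (epsB e B i = 0 ∧ 0 < phiB e B i ∧ phiB e (dotF e B i) i = 0) ∧
      validChain e (dotF e B i) rest

/-- `B` induces semisimply to `C` (displays with the same number of beads). -/
def InducesSS (e : ℕ) (B C : Finset ℕ) : Prop :=
  ∃ L : List ℕ, validChain e B L ∧ chainFold e B L = C

/-- Re-display a beta-set with `s` additional beads. -/
def shiftBeta (B : Finset ℕ) (s : ℕ) : Finset ℕ :=
  B.image (· + s) ∪ Finset.range s

/-- `B` induces semisimply to the partition displayed by `C` (where `C` may use a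
different number of beads). -/
def InducesToPartition (e : ℕ) (B C : Finset ℕ) : Prop :=
  ∃ D : Finset ℕ, InducesSS e B D ∧ shiftBeta D C.card = shiftBeta C D.card

/-- The block with bead counts `bd` and weight `w` is Rouquier:
for all `i < j < e`, `bd i − bd j ≥ w` or `bd j − bd i ≥ w − 1`. -/
def IsRouquier (e w : ℕ) (bd : ℕ → ℕ) : Prop :=
  ∀ i j, i < j → j < e → bd j + w ≤ bd i ∨ bd i + (w - 1) ≤ bd j

/-- `lam` is e-singular: it has `e` consecutive equal nonzero parts. -/
def ESingular (e : ℕ) (lam : AbacusPartition) : Prop :=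
  ∃ i, lam.parts i ≠ 0 ∧ ∀ m < e, lam.parts (i + m) = lam.parts i

/-- `lam` is e-regular. -/
def ERegular (e : ℕ) (lam : AbacusPartition) : Prop := ¬ ESingular e lam

/-- The induced e-sequence of the display `B`, as a multiset: each bead of
positive weight `w` at position `p` contributes `p, p−e, …, p−(w−1)e`. -/
def inducedSeq (e : ℕ) (B : Finset ℕ) : Multiset ℕ :=
  B.val.bind (fun p => (Multiset.range (beadWeight e B p)).map (fun m => p - m * e))

/-- The product order: `lam ≤_P mu` iff they have the same e-core and e-weight and
`s(mu)_r ≥ s(lam)_r` componentwise for all sufficiently large `r`. -/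
def ProdLE (e : ℕ) (lam mu : AbacusPartition) : Prop :=
  (∃ r, lam.len ≤ r ∧ mu.len ≤ r ∧
    coreBeta e (lam.betaSet r) = coreBeta e (mu.betaSet r)) ∧
  eWeight e lam = eWeight e mu ∧
  ∃ r0, ∀ r, r0 ≤ r →
    List.Forall₂ (· ≤ ·) ((inducedSeq e (lam.betaSet r)).sort (· ≤ ·))
      ((inducedSeq e (mu.betaSet r)).sort (· ≤ ·))


def mSign (B : Finset ℕ) (p : ℕ) : Bool := decide (p ∈ B ∧ ¬(p = 0 ∨ p - 1 ∈ B))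
def pSign (B : Finset ℕ) (p : ℕ) : Bool := decide (p ∉ B ∧ (p = 0 ∨ p - 1 ∈ B))

lemma aux_step_len (B : Finset ℕ) (st : List ℕ × List ℕ) (a : ℕ) :
    (st.2.length : ℤ) + (if mSign B a then 1 else 0) - (if pSign B a then 1 else 0)
      ≤ ((signStep B st a).2.length : ℤ) := by
  by_cases hm : a ∈ B ∧ ¬(a = 0 ∨ a - 1 ∈ B)
  · have h2 : pSign B a = false := by simp only [pSign, decide_eq_false_iff_not]; tauto
    unfold signStep; rw [if_pos hm]; simp [mSign, h2, hm]
  · by_cases hp : a ∉ B ∧ (a = 0 ∨ a - 1 ∈ B)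
    · have h1 : mSign B a = false := by simp only [mSign, decide_eq_false_iff_not]; tauto
      have h2 : pSign B a = true := by simp [pSign]; tauto
      rcases st with ⟨s1, s2⟩
      cases s2 with
      | nil => unfold signStep; rw [if_neg hm, if_pos hp]; simp [h1, h2]
      | cons b tl => unfold signStep; rw [if_neg hm, if_pos hp]; simp [h1, h2]
    · have h1 : mSign B a = false := by simp only [mSign, decide_eq_false_iff_not]; tauto
      have h2 : pSign B a = false := by simp only [pSign, decide_eq_false_iff_not]; tauto
      unfold signStep; rw [if_neg hm, if_neg hp]; simp [h1, h2]

lemma aux_foldl_count (B : Finset ℕ) (L : List ℕ) : ∀ (st : List ℕ × List ℕ),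
    ((L.foldl (signStep B) st).2.length : ℤ) - ((L.foldl (signStep B) st).1.length : ℤ)
      = (st.2.length : ℤ) - st.1.length + L.countP (mSign B) - L.countP (pSign B) := by
  induction L with
  | nil => intro st; simp
  | cons a L ih =>
    intro st
    rw [List.foldl_cons, List.countP_cons, List.countP_cons, ih]
    by_cases hm : a ∈ B ∧ ¬(a = 0 ∨ a - 1 ∈ B)
    · have h1 : mSign B a = true := by simp [mSign]; tauto
      have h2 : pSign B a = false := by simp only [pSign, decide_eq_false_iff_not]; tauto
      unfold signStep; rw [if_pos hm]; simp [h1, h2]; push_cast; ring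
    · by_cases hp : a ∉ B ∧ (a = 0 ∨ a - 1 ∈ B)
      · have h1 : mSign B a = false := by simp only [mSign, decide_eq_false_iff_not]; tauto
        have h2 : pSign B a = true := by simp [pSign]; tauto
        rcases st with ⟨s1, s2⟩
        cases s2 with
        | nil => unfold signStep; rw [if_neg hm, if_pos hp]; simp [h1, h2]; push_cast; ring
        | cons b tl => unfold signStep; rw [if_neg hm, if_pos hp]; simp [h1, h2]; push_cast; ring
      · have h1 : mSign B a = false := by simp only [mSign, decide_eq_false_iff_not]; tauto
        have h2 : pSign B a = false := by simp only [pSign, decide_eq_false_iff_not]; tauto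
        unfold signStep; rw [if_neg hm, if_neg hp]; simp [h1, h2]

lemma aux_foldl_mem (B : Finset ℕ) (L : List ℕ) : ∀ (st : List ℕ × List ℕ) (x : ℕ),
    x ∈ (L.foldl (signStep B) st).1 →
    x ∈ st.1 ∨ ((x ∉ B ∧ (x = 0 ∨ x - 1 ∈ B)) ∧ ∃ L1 L2, L = L1 ++ x :: L2 ∧
      (L1.countP (mSign B) : ℤ) + st.2.length ≤ L1.countP (pSign B)) := by
  induction L with
  | nil => intro st x hx; exact Or.inl hx
  | cons a L ih =>
    intro st x hx
    rw [List.foldl_cons] at hx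
    rcases ih (signStep B st a) x hx with h | ⟨hpx, L1, L2, hdec, hle⟩
    · -- x survived from (signStep B st a).1
      by_cases hm : a ∈ B ∧ ¬(a = 0 ∨ a - 1 ∈ B)
      · left; rw [show signStep B st a = (st.1, a :: st.2) by unfold signStep; rw [if_pos hm]] at h; exact h
      · by_cases hp : a ∉ B ∧ (a = 0 ∨ a - 1 ∈ B)
        · rcases st with ⟨s1, s2⟩
          cases s2 with
          | nil =>
            have h' : x = a ∨ x ∈ s1 := by
              rw [show signStep B (s1, []) a = (a :: s1, []) by unfold signStep; rw [if_neg hm, if_pos hp]] at h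
              simpa using h
            rcases h' with rfl | h'
            · right
              exact ⟨hp, [], L, rfl, by simp⟩
            · exact Or.inl h'
          | cons b tl =>
            left
            rw [show signStep B (s1, b :: tl) a = (s1, tl) by unfold signStep; rw [if_neg hm, if_pos hp]] at h
            exact h
        · left
          rw [show signStep B st a = st by unfold signStep; rw [if_neg hm, if_neg hp]] at h
          exact h
    · right
      refine ⟨hpx, a :: L1, L2, by rw [hdec, List.cons_append], ?_⟩
      have hstep := aux_step_len B st a
      rw [List.countP_cons, List.countP_cons]
      have : (L1.countP (mSign B) : ℤ) + ((signStep B st a).2.length : ℤ)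
          ≤ L1.countP (pSign B) := hle
      by_cases hma : mSign B a <;> by_cases hpa : pSign B a <;>
        simp [hma, hpa] at hstep ⊢ <;> omega

lemma countP_eq_card_of_mem_iff {l : List ℕ} (hnd : l.Nodup) (f : ℕ → Bool) (s : Finset ℕ)
    (h : ∀ p, p ∈ s ↔ p ∈ l ∧ f p = true) : l.countP f = s.card := by
  rw [List.countP_eq_length_filter, ← List.toFinset_card_of_nodup (hnd.filter f)]
  congr 1
  ext p
  simp only [List.mem_toFinset, List.mem_filter, h p]

lemma prefix_mem_iff {N : ℕ} {q : ℕ → Bool} {L1 L2 : List ℕ} {x : ℕ}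
    (h : (List.range N).filter q = L1 ++ x :: L2) :
    (∀ p, p ∈ L1 ↔ p < x ∧ p < N ∧ q p = true) ∧ L1.Nodup ∧ x < N ∧ q x = true := by
  have hpw : (L1 ++ x :: L2).Pairwise (· < ·) := by
    rw [← h]
    exact List.Pairwise.sublist List.filter_sublist (List.pairwise_lt_range (n := N))
  rw [List.pairwise_append] at hpw
  obtain ⟨h1, h2, h12⟩ := hpw
  have hxmem : x ∈ (List.range N).filter q := by rw [h]; simp
  have hx : x < N ∧ q x = true := by
    simpa [List.mem_filter] using hxmem
  refine ⟨?_, h1.nodup, hx.1, hx.2⟩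
  intro p
  constructor
  · intro hp
    have hmem : p ∈ (List.range N).filter q := by rw [h]; simp [hp]
    have := List.mem_filter.mp hmem
    exact ⟨h12 p hp x (by simp), by simpa using this.1, this.2⟩
  · rintro ⟨hlt, hN, hq⟩
    have hmem : p ∈ L1 ++ x :: L2 := by
      rw [← h]; simp [List.mem_filter, hN, hq]
    rcases List.mem_append.mp hmem with hp | hp
    · exact hp
    · rcases List.mem_cons.mp hp with rfl | hp
      · omega
      · have := (List.pairwise_cons.mp h2).1 p hp
        omega

lemma mod_pred {e p res : ℕ} (hres1 : 1 ≤ res) (hrese : res < e) (h : p % e = res) :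
    (p - 1) % e = res - 1 := by
  obtain ⟨q, hq⟩ : ∃ q, p = e * q + res := ⟨p / e, by rw [← h]; exact (Nat.div_add_mod p e).symm⟩
  have h2 : p - 1 = e * q + (res - 1) := by omega
  rw [h2, Nat.mul_add_mod]
  exact Nat.mod_eq_of_lt (by omega)

lemma mod_pred0 {e p : ℕ} (he : 0 < e) (h : p % e = 0) (hp : 1 ≤ p) : (p - 1) % e = e - 1 := by
  obtain ⟨q, hq⟩ : ∃ q, p = e * q := ⟨p / e, by conv_lhs => rw [← Nat.div_add_mod p e, h, Nat.add_zero]⟩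
  obtain ⟨q', rfl⟩ : ∃ q', q = q' + 1 := ⟨q - 1, by rcases q with _ | q <;> omega⟩
  have h2 : p - 1 = e * q' + (e - 1) := by rw [Nat.mul_add, Nat.mul_one] at hq; omega
  rw [h2, Nat.mul_add_mod]
  exact Nat.mod_eq_of_lt (by omega)

lemma mod_succ {e y res : ℕ} (hres1 : 1 ≤ res) (hrese : res < e) (h : y % e = res - 1) :
    (y + 1) % e = res := by
  obtain ⟨q, hq⟩ : ∃ q, y = e * q + (res - 1) :=
    ⟨y / e, by rw [← h]; exact (Nat.div_add_mod y e).symm⟩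
  have h2 : y + 1 = e * q + res := by omega
  rw [h2, Nat.mul_add_mod]
  exact Nat.mod_eq_of_lt hrese

lemma mod_succ0 {e y : ℕ} (he : 0 < e) (h : y % e = e - 1) : (y + 1) % e = 0 := by
  obtain ⟨q, hq⟩ : ∃ q, y = e * q + (e - 1) :=
    ⟨y / e, by rw [← h]; exact (Nat.div_add_mod y e).symm⟩
  have h2 : y + 1 = e * (q + 1) := by rw [Nat.mul_add, Nat.mul_one]; omega
  rw [h2, Nat.mul_mod_right]

lemma card_identity (e : ℕ) (B : Finset ℕ) (res X : ℕ) :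
    ((Finset.range X).filter (fun p => p % e = res ∧ p ∈ B)).card
      + ((Finset.range X).filter (fun p => p % e = res ∧ p ∉ B ∧ (p = 0 ∨ p - 1 ∈ B))).card
    = ((Finset.range X).filter (fun p => p % e = res ∧ p ∈ B ∧ ¬(p = 0 ∨ p - 1 ∈ B))).card
      + ((Finset.range X).filter (fun p => p % e = res ∧ (p = 0 ∨ p - 1 ∈ B))).card := by
  have h1 := Finset.card_filter_add_card_filter_not
    (s := (Finset.range X).filter (fun p => p % e = res ∧ p ∈ B))
    (p := fun p => (p = 0 ∨ p - 1 ∈ B))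
  have h2 := Finset.card_filter_add_card_filter_not
    (s := (Finset.range X).filter (fun p => p % e = res ∧ (p = 0 ∨ p - 1 ∈ B)))
    (p := fun p => p ∈ B)
  have e1 : ((Finset.range X).filter (fun p => p % e = res ∧ p ∈ B)).filter
      (fun p => (p = 0 ∨ p - 1 ∈ B))
      = ((Finset.range X).filter (fun p => p % e = res ∧ (p = 0 ∨ p - 1 ∈ B))).filter
      (fun p => p ∈ B) := by
    ext p; simp only [Finset.mem_filter]; tauto
  have e2 : ((Finset.range X).filter (fun p => p % e = res ∧ p ∈ B)).filter
      (fun p => ¬(p = 0 ∨ p - 1 ∈ B))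
      = (Finset.range X).filter (fun p => p % e = res ∧ p ∈ B ∧ ¬(p = 0 ∨ p - 1 ∈ B)) := by
    ext p; simp only [Finset.mem_filter]; tauto
  have e3 : ((Finset.range X).filter (fun p => p % e = res ∧ (p = 0 ∨ p - 1 ∈ B))).filter
      (fun p => ¬ p ∈ B)
      = (Finset.range X).filter (fun p => p % e = res ∧ p ∉ B ∧ (p = 0 ∨ p - 1 ∈ B)) := by
    ext p; simp only [Finset.mem_filter]; tauto
  rw [e1, e2] at h1
  rw [e3] at h2
  omega

lemma runner_weight_lower (e : ℕ) (he : 2 ≤ e) (B : Finset ℕ) (res kk : ℕ)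
    (hrese : res < e)
    (cres cprev : ℕ)
    (hcres : runnerCount e B res = cres)
    (hcprev : runnerCount e B (if res = 0 then e - 1 else res - 1) = cprev)
    (hbd : cres = cprev + kk + (if res = 0 then 1 else 0))
    (heps : kk + 1 ≤ epsB e B res) :
    kk + 1 ≤ runnerWeight e B res := by
  have he0 : 0 < e := by omega
  set N := B.sup id + e + 2 with hN
  have hble : ∀ p ∈ B, p + 1 < N := by
    intro p hp
    have : id p ≤ B.sup id := Finset.le_sup hp
    simp only [id] at this
    omega
  set q : ℕ → Bool := fun p => p % e == res with hq
  have hql : posList e B res = (List.range N).filter q := rfl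
  have hLnd : (posList e B res).Nodup := by
    rw [hql]; exact (List.nodup_range (n := N)).filter q
  -- counts over the full list
  have hMcN : (posList e B res).countP (mSign B)
      = ((Finset.range N).filter (fun p => p % e = res ∧ p ∈ B ∧ ¬(p = 0 ∨ p - 1 ∈ B))).card := by
    apply countP_eq_card_of_mem_iff hLnd
    intro p
    rw [hql]
    simp only [Finset.mem_filter, Finset.mem_range, List.mem_filter, List.mem_range, hq,
      beq_iff_eq, mSign, decide_eq_true_eq]
    tauto
  have hPcN : (posList e B res).countP (pSign B)
      = ((Finset.range N).filter (fun p => p % e = res ∧ p ∉ B ∧ (p = 0 ∨ p - 1 ∈ B))).card := by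
    apply countP_eq_card_of_mem_iff hLnd
    intro p
    rw [hql]
    simp only [Finset.mem_filter, Finset.mem_range, List.mem_filter, List.mem_range, hq,
      beq_iff_eq, pSign, decide_eq_true_eq]
    tauto
  -- Occ over full range equals cres
  have hOccN : ((Finset.range N).filter (fun p => p % e = res ∧ p ∈ B)).card = cres := by
    rw [← hcres]
    unfold runnerCount
    congr 1
    ext p
    simp only [Finset.mem_filter, Finset.mem_range]
    constructor
    · rintro ⟨-, h1, h2⟩; exact ⟨h2, h1⟩
    · rintro ⟨h2, h1⟩; exact ⟨by have := hble p h2; omega, h1, h2⟩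
  -- Pre over full range
  have hPreN : ((Finset.range N).filter (fun p => p % e = res ∧ (p = 0 ∨ p - 1 ∈ B))).card
      = cprev + (if res = 0 then 1 else 0) := by
    by_cases hres0 : res = 0
    · subst hres0
      norm_num at hcprev ⊢
      have hsplit := Finset.card_filter_add_card_filter_not
        (s := (Finset.range N).filter (fun p => p % e = 0 ∧ (p = 0 ∨ p - 1 ∈ B)))
        (p := fun p => p = 0)
      have hzero : ((Finset.range N).filter (fun p => p % e = 0 ∧ (p = 0 ∨ p - 1 ∈ B))).filter
          (fun p => p = 0) = {0} := by
        ext p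
        simp only [Finset.mem_filter, Finset.mem_range, Finset.mem_singleton]
        constructor
        · tauto
        · rintro rfl; exact ⟨⟨by omega, by simp, Or.inl rfl⟩, rfl⟩
      have hbij : (((Finset.range N).filter (fun p => p % e = 0 ∧ (p = 0 ∨ p - 1 ∈ B))).filter
          (fun p => ¬ p = 0)).card = (B.filter (fun y => y % e = e - 1)).card := by
        apply Finset.card_nbij' (i := fun p => p - 1) (j := fun y => y + 1)
        · intro p hp
          simp only [Finset.mem_coe, Finset.mem_filter, Finset.mem_range] at hp
          obtain ⟨⟨hpN, hpm, hpre⟩, hp0⟩ := hp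
          have hpB : p - 1 ∈ B := by tauto
          exact Finset.mem_filter.mpr ⟨hpB, mod_pred0 he0 hpm (by omega)⟩
        · intro y hy
          simp only [Finset.mem_coe, Finset.mem_filter] at hy
          refine Finset.mem_filter.mpr ⟨Finset.mem_filter.mpr ⟨?_, ?_, ?_⟩, by dsimp only; omega⟩
          · exact Finset.mem_range.mpr (by have := hble y hy.1; omega)
          · exact mod_succ0 he0 hy.2
          · right; simpa using hy.1
        · intro p hp
          simp only [Finset.mem_coe, Finset.mem_filter] at hp
          dsimp only; omega
        · intro y _; dsimp only; omega
      rw [hzero] at hsplit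
      simp only [Finset.card_singleton] at hsplit
      rw [hbij] at hsplit
      unfold runnerCount at hcprev
      omega
    · simp only [if_neg hres0] at hcprev ⊢
      have hres1 : 1 ≤ res := by omega
      rw [← hcprev]
      unfold runnerCount
      apply Finset.card_nbij' (i := fun p => p - 1) (j := fun y => y + 1)
      · intro p hp
        simp only [Finset.mem_coe, Finset.mem_filter, Finset.mem_range] at hp
        obtain ⟨hpN, hpm, hpre⟩ := hp
        have hp0 : p ≠ 0 := by
          intro h0; rw [h0] at hpm; simp at hpm; omega
        have hpB : p - 1 ∈ B := by tauto
        exact Finset.mem_filter.mpr ⟨hpB, mod_pred hres1 hrese hpm⟩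
      · intro y hy
        simp only [Finset.mem_coe, Finset.mem_filter] at hy
        refine Finset.mem_filter.mpr ⟨?_, ?_, ?_⟩
        · exact Finset.mem_range.mpr (by have := hble y hy.1; omega)
        · exact mod_succ hres1 hrese hy.2
        · right; simpa using hy.1
      · intro p hp
        simp only [Finset.mem_coe, Finset.mem_filter, Finset.mem_range] at hp
        have hp0 : p ≠ 0 := by
          intro h0; rw [h0] at hp; simp at hp; omega
        dsimp only; omega
      · intro y _; dsimp only; omega
  -- epsilon - phi = kk, hence phi >= 1
  have hcount := aux_foldl_count B (posList e B res) ([], [])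
  have hid := card_identity e B res N
  have hepsdef : epsB e B res = ((posList e B res).foldl (signStep B) ([], [])).2.length := rfl
  have hphidef : phiB e B res = ((posList e B res).foldl (signStep B) ([], [])).1.length := rfl
  have hphi : 1 ≤ phiB e B res := by
    rw [hepsdef] at heps
    rw [hphidef]
    rw [hMcN, hPcN] at hcount
    simp only [List.length_nil, Nat.cast_zero] at hcount
    omega
  -- extract a surviving conormal position
  obtain ⟨x0, hx0mem⟩ : ∃ x0, x0 ∈ ((posList e B res).foldl (signStep B) ([], [])).1 := by
    rw [hphidef] at hphi
    exact List.exists_mem_of_length_pos (by omega)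
  rcases aux_foldl_mem B (posList e B res) ([], []) x0 hx0mem with h | ⟨hplus, L1, L2, hdec, hle⟩
  · simp at h
  rw [hql] at hdec
  obtain ⟨hmemiff, hL1nd, hx0N, hqx0⟩ := prefix_mem_iff hdec
  have hx0res : x0 % e = res := by simpa [hq] using hqx0
  have hx0B : x0 ∉ B := hplus.1
  -- counts over the prefix
  have hMc1 : L1.countP (mSign B)
      = ((Finset.range x0).filter (fun p => p % e = res ∧ p ∈ B ∧ ¬(p = 0 ∨ p - 1 ∈ B))).card := by
    apply countP_eq_card_of_mem_iff hL1nd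
    intro p
    rw [hmemiff p]
    simp only [Finset.mem_filter, Finset.mem_range, hq, beq_iff_eq, mSign, decide_eq_true_eq]
    constructor
    · rintro ⟨h1, h2, h3, h4⟩; exact ⟨⟨h1, by omega, h2⟩, h3, h4⟩
    · rintro ⟨⟨h1, -, h2⟩, h3, h4⟩; exact ⟨h1, h2, h3, h4⟩
  have hPc1 : L1.countP (pSign B)
      = ((Finset.range x0).filter (fun p => p % e = res ∧ p ∉ B ∧ (p = 0 ∨ p - 1 ∈ B))).card := by
    apply countP_eq_card_of_mem_iff hL1nd
    intro p
    rw [hmemiff p]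
    simp only [Finset.mem_filter, Finset.mem_range, hq, beq_iff_eq, pSign, decide_eq_true_eq]
    constructor
    · rintro ⟨h1, h2, h3, h4⟩; exact ⟨⟨h1, by omega, h2⟩, h3, h4⟩
    · rintro ⟨⟨h1, -, h2⟩, h3, h4⟩; exact ⟨h1, h2, h3, h4⟩
  have hocc_le_pre :
      ((Finset.range x0).filter (fun p => p % e = res ∧ p ∈ B)).card
        ≤ ((Finset.range x0).filter (fun p => p % e = res ∧ (p = 0 ∨ p - 1 ∈ B))).card := by
    have hid0 := card_identity e B res x0
    rw [hMc1, hPc1] at hle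
    have hz : ((([] : List ℕ), ([] : List ℕ)).2.length : ℤ) = 0 := rfl
    rw [hz, add_zero] at hle
    have hle' : ((Finset.range x0).filter
          (fun p => p % e = res ∧ p ∈ B ∧ ¬(p = 0 ∨ p - 1 ∈ B))).card
        ≤ ((Finset.range x0).filter (fun p => p % e = res ∧ p ∉ B ∧ (p = 0 ∨ p - 1 ∈ B))).card := by
      exact_mod_cast hle
    omega
  -- Pre over the prefix is small
  have hpre_small :
      ((Finset.range x0).filter (fun p => p % e = res ∧ (p = 0 ∨ p - 1 ∈ B))).card + kk + 1
        ≤ cres := by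
    by_cases hx00 : x0 = 0
    · subst hx00
      have hres0 : res = 0 := by rw [← hx0res]; simp
      have hite : (if res = 0 then 1 else 0) = 1 := if_pos hres0
      have hbd' : cres = cprev + kk + 1 := by rw [hite] at hbd; exact hbd
      simp only [Finset.range_zero, Finset.filter_empty, Finset.card_empty]
      omega
    · have hx0B1 : x0 - 1 ∈ B := by
        rcases hplus.2 with h | h
        · omega
        · exact h
      set prevres := if res = 0 then e - 1 else res - 1 with hprevres
      have hx0prev : (x0 - 1) % e = prevres := by
        by_cases hres0 : res = 0
        · rw [hprevres, if_pos hres0]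
          exact mod_pred0 he0 (by rw [hx0res, hres0]) (by omega)
        · rw [hprevres, if_neg hres0]
          exact mod_pred (by omega) hrese hx0res
      have hmemf : x0 - 1 ∈ B.filter (fun y => y % e = prevres) :=
        Finset.mem_filter.mpr ⟨hx0B1, hx0prev⟩
      have hcprev1 : 1 ≤ cprev := by
        rw [← hcprev]
        exact Finset.card_pos.mpr ⟨x0 - 1, hmemf⟩
      have hsplit := Finset.card_filter_add_card_filter_not
        (s := (Finset.range x0).filter (fun p => p % e = res ∧ (p = 0 ∨ p - 1 ∈ B)))
        (p := fun p => p = 0)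
      have hz : (((Finset.range x0).filter (fun p => p % e = res ∧ (p = 0 ∨ p - 1 ∈ B))).filter
          (fun p => p = 0)).card ≤ (if res = 0 then 1 else 0) := by
        by_cases hres0 : res = 0
        · rw [if_pos hres0]
          have : (((Finset.range x0).filter (fun p => p % e = res ∧ (p = 0 ∨ p - 1 ∈ B))).filter
              (fun p => p = 0)) ⊆ {0} := by
            intro p hp
            simp only [Finset.mem_filter] at hp
            simp [hp.2]
          calc _ ≤ ({0} : Finset ℕ).card := Finset.card_le_card this
            _ = 1 := rfl
        · rw [if_neg hres0]
          have : (((Finset.range x0).filter (fun p => p % e = res ∧ (p = 0 ∨ p - 1 ∈ B))).filter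
              (fun p => p = 0)) = ∅ := by
            ext p
            simp only [Finset.mem_filter, Finset.mem_range, Finset.notMem_empty, iff_false]
            rintro ⟨⟨-, hm, -⟩, rfl⟩
            simp at hm
            omega
          simp [this]
      have hinj : (((Finset.range x0).filter (fun p => p % e = res ∧ (p = 0 ∨ p - 1 ∈ B))).filter
          (fun p => ¬ p = 0)).card ≤ cprev - 1 := by
        have htgt : ((B.filter (fun y => y % e = prevres)).erase (x0 - 1)).card = cprev - 1 := by
          rw [Finset.card_erase_of_mem hmemf, ← hcprev]
          rfl
        rw [← htgt]
        apply Finset.card_le_card_of_injOn (fun p => p - 1)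
        · intro p hp
          simp only [Finset.mem_coe, Finset.mem_filter, Finset.mem_range] at hp
          obtain ⟨⟨hpx0, hpm, hpre⟩, hp0⟩ := hp
          have hpB : p - 1 ∈ B := by tauto
          have hpprev : (p - 1) % e = prevres := by
            by_cases hres0 : res = 0
            · rw [hprevres, if_pos hres0]
              exact mod_pred0 he0 (by rw [hpm, hres0]) (by omega)
            · rw [hprevres, if_neg hres0]
              exact mod_pred (by omega) hrese hpm
          apply Finset.mem_erase.mpr
          refine ⟨by show p - 1 ≠ x0 - 1; omega, Finset.mem_filter.mpr ⟨hpB, hpprev⟩⟩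
        · intro a ha b hb hab
          simp only [Finset.coe_filter, Set.mem_setOf_eq, Finset.mem_filter] at ha hb
          have ha0 : a ≠ 0 := ha.2
          have hb0 : b ≠ 0 := hb.2
          have hab' : a - 1 = b - 1 := hab
          omega
      have hcomb : ((Finset.range x0).filter (fun p => p % e = res ∧ (p = 0 ∨ p - 1 ∈ B))).card
          ≤ (if res = 0 then 1 else 0) + (cprev - 1) := by
        rw [← hsplit]
        exact Nat.add_le_add hz hinj
      rcases eq_or_ne res 0 with hres0 | hres0
      · rw [if_pos hres0] at hbd hcomb
        omega
      · rw [if_neg hres0] at hbd hcomb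
        omega
  -- beads above x0
  have hsplit2 := Finset.card_filter_add_card_filter_not
    (s := B.filter (fun p => p % e = res)) (p := fun p => p < x0)
  have hlow : ((B.filter (fun p => p % e = res)).filter (fun p => p < x0)).card
      = ((Finset.range x0).filter (fun p => p % e = res ∧ p ∈ B)).card := by
    congr 1
    ext p
    simp only [Finset.mem_filter, Finset.mem_range]
    tauto
  have hhigh : ((B.filter (fun p => p % e = res)).filter (fun p => ¬ p < x0))
      = (B.filter (fun p => p % e = res ∧ x0 < p)) := by
    ext p
    simp only [Finset.mem_filter]
    constructor
    · rintro ⟨⟨h1, h2⟩, h3⟩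
      have : p ≠ x0 := by rintro rfl; exact hx0B h1
      exact ⟨h1, h2, by omega⟩
    · rintro ⟨h1, h2, h3⟩
      exact ⟨⟨h1, h2⟩, by omega⟩
  have hhighcard : kk + 1 ≤ (B.filter (fun p => p % e = res ∧ x0 < p)).card := by
    have hcres' : (B.filter (fun p => p % e = res)).card = cres := hcres
    rw [hlow, hhigh] at hsplit2
    omega
  -- each high bead has weight >= 1
  have hbw : ∀ p ∈ B.filter (fun p => p % e = res ∧ x0 < p), 1 ≤ beadWeight e B p := by
    intro p hp
    simp only [Finset.mem_filter] at hp
    unfold beadWeight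
    rw [Nat.succ_le_iff, Finset.card_pos]
    refine ⟨x0, Finset.mem_filter.mpr ⟨Finset.mem_range.mpr hp.2.2, ?_, hx0B⟩⟩
    rw [hx0res, hp.2.1]
  calc kk + 1 ≤ (B.filter (fun p => p % e = res ∧ x0 < p)).card := hhighcard
    _ = (B.filter (fun p => p % e = res ∧ x0 < p)).card • 1 := by simp
    _ ≤ (B.filter (fun p => p % e = res ∧ x0 < p)).sum (beadWeight e B) :=
        Finset.card_nsmul_le_sum _ _ _ hbw
    _ ≤ (B.filter (fun p => p % e = res)).sum (beadWeight e B) := by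
        apply Finset.sum_le_sum_of_subset
        intro p hp
        simp only [Finset.mem_filter] at hp ⊢
        tauto
    _ = runnerWeight e B res := rfl

/-- if a block of weight `w ∈ {3,4}` forms `[w:k_m]`-pairs via `t`
distinct runners, and `σ` in the block is exceptional for all of them, then
`∑ (k_m + 1) ≤ w`; in particular for `w = 3` necessarily `t = 1` and `k_1 ≤ 2`,
and for `w = 4` either `t = 1` and `k_1 ≤ 3` or `t = 2` and `k_1 = k_2 = 1`. -/
theorem stmt6 (e : ℕ) (he : 2 ≤ e) (w : ℕ) (hw34 : w = 3 ∨ w = 4)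
    (bd : ℕ → ℕ) (t : ℕ) (ht : 1 ≤ t)
    (runner : Fin t → ℕ) (hinj : Function.Injective runner)
    (hre : ∀ m, runner m < e) (k : Fin t → ℕ) (hk : ∀ m, 1 ≤ k m)
    (hpair : ∀ m, (0 < runner m → bd (runner m) = bd (runner m - 1) + k m) ∧
      (runner m = 0 → bd 0 = bd (e - 1) + k m + 1))
    (r : ℕ) (hr : r = (Finset.range e).sum bd)
    (sig : AbacusPartition) (hσ : inBlock e bd w sig)
    (hexc : ∀ m, k m + 1 ≤ epsB e (sig.betaSet r) (runner m)) :
    (∑ m, (k m + 1)) ≤ w ∧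
    (w = 3 → t = 1 ∧ ∀ m, k m ≤ 2) ∧
    (w = 4 → (t = 1 ∧ ∀ m, k m ≤ 3) ∨ (t = 2 ∧ ∀ m, k m = 1)) := by
  subst hr
  set r := (Finset.range e).sum bd with hr
  set B := sig.betaSet r with hB
  have key : ∀ m, k m + 1 ≤ runnerWeight e B (runner m) := by
    intro m
    have hprevlt : (if runner m = 0 then e - 1 else runner m - 1) < e := by
      rcases eq_or_ne (runner m) 0 with h0 | h0
      · rw [if_pos h0]; omega
      · rw [if_neg h0]; have := hre m; omega
    apply runner_weight_lower e he B (runner m) (k m) (hre m)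
      (bd (runner m)) (bd (if runner m = 0 then e - 1 else runner m - 1))
      (hσ.2.1 (runner m) (hre m)) (hσ.2.1 _ hprevlt)
    · rcases eq_or_ne (runner m) 0 with h0 | h0
      · rw [if_pos h0, if_pos h0, h0]
        have := (hpair m).2 h0
        omega
      · rw [if_neg h0, if_neg h0]
        have := (hpair m).1 (by omega)
        omega
    · exact hexc m
  have hS : (∑ m, (k m + 1)) ≤ w := by
    have h1 : (∑ m, (k m + 1)) ≤ ∑ m, runnerWeight e B (runner m) :=
      Finset.sum_le_sum (fun m _ => key m)
    have h2 : ∑ m, runnerWeight e B (runner m)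
        = ∑ i ∈ Finset.univ.image runner, runnerWeight e B i :=
      (Finset.sum_image (fun x _ y _ h => hinj h)).symm
    have h3 : ∑ i ∈ Finset.univ.image runner, runnerWeight e B i
        ≤ ∑ i ∈ Finset.range e, runnerWeight e B i := by
      apply Finset.sum_le_sum_of_subset
      intro i hi
      simp only [Finset.mem_image, Finset.mem_univ, true_and] at hi
      obtain ⟨m, rfl⟩ := hi
      exact Finset.mem_range.mpr (hre m)
    have h4 : ∑ i ∈ Finset.range e, runnerWeight e B i = abacusWeight e B := by
      unfold runnerWeight abacusWeight
      exact Finset.sum_fiberwise_of_maps_to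
        (fun p _ => Finset.mem_range.mpr (Nat.mod_lt p (by omega))) (beadWeight e B)
    have h5 : abacusWeight e B = w := hσ.2.2
    omega
  have hterm : ∀ m : Fin t, k m + 1 + 2 * (t - 1) ≤ w := by
    intro m
    have hsum : (k m + 1) + ∑ i ∈ Finset.univ.erase m, (k i + 1) = ∑ i, (k i + 1) :=
      Finset.add_sum_erase Finset.univ (fun i => k i + 1) (Finset.mem_univ m)
    have herase : 2 * (t - 1) ≤ ∑ i ∈ Finset.univ.erase m, (k i + 1) := by
      have h2 := Finset.card_nsmul_le_sum (Finset.univ.erase m) (fun i => k i + 1) 2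
        (fun i _ => by have := hk i; show 2 ≤ k i + 1; omega)
      rw [Finset.card_erase_of_mem (Finset.mem_univ m), Finset.card_univ, Fintype.card_fin,
        smul_eq_mul, Nat.mul_comm] at h2
      exact h2
    omega
  have hm0 := hterm ⟨0, ht⟩
  have hk0 := hk ⟨0, ht⟩
  refine ⟨hS, ?_, ?_⟩
  · rintro rfl
    have ht1 : t = 1 := by omega
    exact ⟨ht1, fun m => by have := hterm m; omega⟩
  · rintro rfl
    have ht2 : t = 1 ∨ t = 2 := by omega
    rcases ht2 with ht2 | ht2
    · exact Or.inl ⟨ht2, fun m => by have := hterm m; rw [ht2] at this; omega⟩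
    · exact Or.inr ⟨ht2, fun m => by have h := hterm m; have := hk m; rw [ht2] at h; omega⟩
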